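/- Let I ⊆ ℝ be an interval, and for j = 1, 2 let q_j : I → ℝ be differentiable positive functions and γ_j : I → ℂ differentiable with γ_j'(θ) = q_j(θ)·exp(iθ) for all θ ∈ I. If −q₁'(θ)/q₁(θ) = −q₂'(θ)/q₂(θ) for all θ ∈ I, then there exist r > 0 and b ∈ ℂ such that γ₂(θ) = r·γ₁(θ) + b for all θ ∈ I. -/
import Mathlib


/-- uniqueness in the fundamental theorem of similarity plane geometry.
Two curves parametrized by the turning angle with the same similarity curvature
`u = -q'/q` differ by a scaling and a translation. -/
theorem similarity_curvature_determines_curve (I : Set ℝ) (hIinterval : I.OrdConnected)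
    (q₁ q₂ q₁' q₂' : ℝ → ℝ) (γ₁ γ₂ : ℝ → ℂ)
    (hq₁pos : ∀ θ ∈ I, 0 < q₁ θ) (hq₂pos : ∀ θ ∈ I, 0 < q₂ θ)
    (hq₁ : ∀ θ ∈ I, HasDerivAt q₁ (q₁' θ) θ)
    (hq₂ : ∀ θ ∈ I, HasDerivAt q₂ (q₂' θ) θ)
    (hγ₁ : ∀ θ ∈ I, HasDerivAt γ₁ ((q₁ θ : ℂ) * Complex.exp (θ * Complex.I)) θ)
    (hγ₂ : ∀ θ ∈ I, HasDerivAt γ₂ ((q₂ θ : ℂ) * Complex.exp (θ * Complex.I)) θ)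
    (hu : ∀ θ ∈ I, -q₁' θ / q₁ θ = -q₂' θ / q₂ θ) :
    ∃ r : ℝ, 0 < r ∧ ∃ b : ℂ, ∀ θ ∈ I, γ₂ θ = (r : ℂ) * γ₁ θ + b := by
  rcases I.eq_empty_or_nonempty with hI | ⟨θ₀, hθ₀⟩
  · exact ⟨1, one_pos, 0, by simp [hI]⟩
  have hconv : Convex ℝ I := hIinterval.convex
  set r : ℝ := q₂ θ₀ / q₁ θ₀ with hrdef
  have hrpos : 0 < r := div_pos (hq₂pos _ hθ₀) (hq₁pos _ hθ₀)
  -- the ratio q₂/q₁ is constant on I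
  have hd : ∀ x ∈ I, HasDerivWithinAt (fun t => q₂ t / q₁ t) ((fun _ => (0:ℝ)) x) I x := by
    intro x hx
    have h1 := (hq₂ x hx).div (hq₁ x hx) (hq₁pos x hx).ne'
    have hu' := hu x hx
    have h1pos := (hq₁pos x hx).ne'
    have h2pos := (hq₂pos x hx).ne'
    have hz : (q₂' x * q₁ x - q₂ x * q₁' x) / q₁ x ^ 2 = 0 := by
      field_simp at hu' ⊢
      linarith [hu']
    rw [hz] at h1
    exact h1.hasDerivWithinAt
  have hratio : ∀ θ ∈ I, q₂ θ = r * q₁ θ := by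
    intro θ hθ
    have key := Convex.norm_image_sub_le_of_norm_hasDerivWithin_le hd
      (C := 0) (fun x hx => by simp) hconv hθ₀ hθ
    simp only [zero_mul] at key
    have : q₂ θ / q₁ θ - q₂ θ₀ / q₁ θ₀ = 0 := by
      have := norm_sub_eq_zero_iff.1 (le_antisymm key (norm_nonneg _))
      simpa [sub_eq_zero] using this
    have h3 : q₂ θ / q₁ θ = r := by rw [hrdef]; linarith
    have := (hq₁pos θ hθ).ne'
    field_simp at h3
    linarith [h3]
  -- γ₂ - r • γ₁ is constant on I
  have hg : ∀ x ∈ I, HasDerivWithinAt (fun t => γ₂ t - (r : ℂ) * γ₁ t)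
      ((fun _ => (0:ℂ)) x) I x := by
    intro x hx
    have h1 := (hγ₂ x hx).sub ((hγ₁ x hx).const_mul (r : ℂ))
    have hz : (q₂ x : ℂ) * Complex.exp (x * Complex.I)
        - (r : ℂ) * ((q₁ x : ℂ) * Complex.exp (x * Complex.I)) = 0 := by
      have : (q₂ x : ℂ) = (r : ℂ) * (q₁ x : ℂ) := by
        rw [← Complex.ofReal_mul]; exact_mod_cast congrArg Complex.ofReal (hratio x hx)
      rw [this]; ring
    rw [hz] at h1
    exact h1.hasDerivWithinAt
  refine ⟨r, hrpos, γ₂ θ₀ - (r : ℂ) * γ₁ θ₀, ?_⟩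
  intro θ hθ
  have key := Convex.norm_image_sub_le_of_norm_hasDerivWithin_le hg
    (C := 0) (fun x hx => by simp) hconv hθ₀ hθ
  simp only [zero_mul] at key
  have := norm_sub_eq_zero_iff.1 (le_antisymm key (norm_nonneg _))
  have h2 : γ₂ θ - (r : ℂ) * γ₁ θ = γ₂ θ₀ - (r : ℂ) * γ₁ θ₀ := this
  linear_combination h2
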